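/- Let (Ω, μ) be a probability space, let A, Â : Ω → Bool be measurable, let S be a countable type with the discrete measurable structure, and let Z : Ω → S be measurable. Assume: (positivity) for every a, â ∈ Bool, μ{ω | A ω = a} > 0, μ{ω | Â ω = â} > 0, and μ{ω | Â ω = â ∧ A ω = a} > 0; (conditional independence) for every â ∈ Bool, z ∈ S, a ∈ Bool, μ[{ω | Â ω = â ∧ Z ω = z} | {ω | A ω = a}] = μ[{ω | Â ω = â} | {ω | A ω = a}] · μ[{ω | Z ω = z} | {ω | A ω = a}]; (non-randomness) μ[{ω | A ω = true} | {ω | Â ω = true}] ≠ μ[{ω | A ω = true} | {ω | Â ω = false}]; (representation parity given the estimate) for every z ∈ S, μ[{ω | Z ω = z} | {ω | Â ω = true}] = μ[{ω | Z ω = z} | {ω | Â ω = false}]. Then the representation satisfies parity with respect to the true sensitive attribute: for every z ∈ S, μ[{ω | Z ω = z} | {ω | A ω = true}] = μ[{ω | Z ω = z} | {ω | A ω = false}]. -/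

import Mathlib

open MeasureTheory ProbabilityTheory

/-- Key intermediate step in Theorem 1 of the paper: parity of the learned
representation `Z` with respect to the true sensitive attribute `A`. -/
theorem fairda_representation_parity
    {Ω : Type*} [MeasurableSpace Ω] (μ : Measure Ω) [IsProbabilityMeasure μ]
    {S : Type*} [MeasurableSpace S] [MeasurableSingletonClass S] [Countable S]
    (A Ahat : Ω → Bool) (hA : Measurable A) (hAhat : Measurable Ahat)
    (Z : Ω → S) (hZ : Measurable Z)
    (hposA : ∀ a : Bool, 0 < μ {ω | A ω = a})
    (hposAhat : ∀ ahat : Bool, 0 < μ {ω | Ahat ω = ahat})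
    (hposAhatA : ∀ ahat a : Bool, 0 < μ {ω | Ahat ω = ahat ∧ A ω = a})
    (hCI : ∀ (ahat : Bool) (z : S) (a : Bool),
      μ[{ω | Ahat ω = ahat ∧ Z ω = z} | {ω | A ω = a}]
        = μ[{ω | Ahat ω = ahat} | {ω | A ω = a}] * μ[{ω | Z ω = z} | {ω | A ω = a}])
    (hNR : μ[{ω | A ω = true} | {ω | Ahat ω = true}]
        ≠ μ[{ω | A ω = true} | {ω | Ahat ω = false}])
    (hOpt : ∀ z : S,
      μ[{ω | Z ω = z} | {ω | Ahat ω = true}] = μ[{ω | Z ω = z} | {ω | Ahat ω = false}]) :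
    ∀ z : S,
      μ[{ω | Z ω = z} | {ω | A ω = true}] = μ[{ω | Z ω = z} | {ω | A ω = false}] := by
  intro z
  have hmA : ∀ a : Bool, MeasurableSet {ω | A ω = a} :=
    fun a => hA (MeasurableSet.singleton a)
  have hmAhat : ∀ a : Bool, MeasurableSet {ω | Ahat ω = a} :=
    fun a => hAhat (MeasurableSet.singleton a)
  have hmZ : MeasurableSet {ω | Z ω = z} := hZ (MeasurableSet.singleton z)
  have hfin : ∀ s : Set Ω, μ s ≠ ⊤ := fun s => measure_ne_top μ s
  -- splitting a set according to the value of A (resp. Ahat)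
  have hsplitA : ∀ s : Set Ω, μ s
      = μ (s ∩ {ω | A ω = true}) + μ (s ∩ {ω | A ω = false}) := by
    intro s
    rw [← measure_inter_add_diff s (hmA true)]
    have hd : s \ {ω | A ω = true} = s ∩ {ω | A ω = false} := by
      ext ω
      simp [Set.mem_diff, Bool.not_eq_true]
    rw [hd]
  -- conditional independence in real form
  have hCIreal : ∀ ahat a : Bool,
      (μ ({ω | A ω = a} ∩ {ω | Ahat ω = ahat ∧ Z ω = z})).toReal
        * (μ {ω | A ω = a}).toReal
      = (μ ({ω | A ω = a} ∩ {ω | Ahat ω = ahat})).toReal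
        * (μ ({ω | A ω = a} ∩ {ω | Z ω = z})).toReal := by
    intro ahat a
    have h := hCI ahat z a
    rw [cond_apply (hmA a), cond_apply (hmA a), cond_apply (hmA a)] at h
    have h' := congrArg ENNReal.toReal h
    rw [ENNReal.toReal_mul, ENNReal.toReal_mul, ENNReal.toReal_mul, ENNReal.toReal_mul,
      ENNReal.toReal_inv] at h'
    have hpa : (0:ℝ) < (μ {ω | A ω = a}).toReal :=
      ENNReal.toReal_pos (hposA a).ne' (hfin _)
    field_simp at h'
    nlinarith [h', hpa]
  -- total probability decomposition of μ({Ahat = â} ∩ {Z = z}), combined with CI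
  have hn : ∀ ahat : Bool,
      (μ ({ω | Ahat ω = ahat} ∩ {ω | Z ω = z})).toReal
        * (μ {ω | A ω = true}).toReal * (μ {ω | A ω = false}).toReal
      = (μ ({ω | A ω = true} ∩ {ω | Ahat ω = ahat})).toReal
          * (μ ({ω | A ω = true} ∩ {ω | Z ω = z})).toReal
          * (μ {ω | A ω = false}).toReal
        + (μ ({ω | A ω = false} ∩ {ω | Ahat ω = ahat})).toReal
          * (μ ({ω | A ω = false} ∩ {ω | Z ω = z})).toReal
          * (μ {ω | A ω = true}).toReal := by
    intro ahat
    have hset : ∀ a : Bool, {ω | Ahat ω = ahat ∧ Z ω = z} ∩ {ω | A ω = a}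
        = {ω | A ω = a} ∩ {ω | Ahat ω = ahat ∧ Z ω = z} := fun a => Set.inter_comm _ _
    have hset2 : ({ω | Ahat ω = ahat} ∩ {ω | Z ω = z} : Set Ω)
        = {ω | Ahat ω = ahat ∧ Z ω = z} := rfl
    have hsplit := hsplitA {ω | Ahat ω = ahat ∧ Z ω = z}
    rw [hset true, hset false] at hsplit
    have h1 := hCIreal ahat true
    have h2 := hCIreal ahat false
    have hpT : (0:ℝ) < (μ {ω | A ω = true}).toReal :=
      ENNReal.toReal_pos (hposA true).ne' (hfin _)
    have hpF : (0:ℝ) < (μ {ω | A ω = false}).toReal :=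
      ENNReal.toReal_pos (hposA false).ne' (hfin _)
    rw [hset2, hsplit, ENNReal.toReal_add (hfin _) (hfin _)]
    nlinarith [h1, h2, hpT, hpF]
  -- column sums: μ {Ahat = â} = Σ_a μ ({A = a} ∩ {Ahat = â})
  have hrow : ∀ ahat : Bool, (μ {ω | Ahat ω = ahat}).toReal
      = (μ ({ω | A ω = true} ∩ {ω | Ahat ω = ahat})).toReal
        + (μ ({ω | A ω = false} ∩ {ω | Ahat ω = ahat})).toReal := by
    intro ahat
    rw [← ENNReal.toReal_add (hfin _) (hfin _)]
    congr 1
    rw [hsplitA {ω | Ahat ω = ahat},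
      Set.inter_comm {ω | Ahat ω = ahat} {ω | A ω = true},
      Set.inter_comm {ω | Ahat ω = ahat} {ω | A ω = false}]
  -- hOpt in real form
  have hOptR : (μ {ω | Ahat ω = true}).toReal⁻¹
        * (μ ({ω | Ahat ω = true} ∩ {ω | Z ω = z})).toReal
      = (μ {ω | Ahat ω = false}).toReal⁻¹
        * (μ ({ω | Ahat ω = false} ∩ {ω | Z ω = z})).toReal := by
    have h := hOpt z
    rw [cond_apply (hmAhat true), cond_apply (hmAhat false)] at h
    have h' := congrArg ENNReal.toReal h
    rwa [ENNReal.toReal_mul, ENNReal.toReal_mul, ENNReal.toReal_inv,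
      ENNReal.toReal_inv] at h'
  -- hNR in real form
  have hNRR : (μ {ω | Ahat ω = true}).toReal⁻¹
        * (μ ({ω | A ω = true} ∩ {ω | Ahat ω = true})).toReal
      ≠ (μ {ω | Ahat ω = false}).toReal⁻¹
        * (μ ({ω | A ω = true} ∩ {ω | Ahat ω = false})).toReal := by
    intro h
    apply hNR
    rw [cond_apply (hmAhat true), cond_apply (hmAhat false),
      Set.inter_comm {ω | Ahat ω = true} {ω | A ω = true},
      Set.inter_comm {ω | Ahat ω = false} {ω | A ω = true}]
    have hfin1 : (μ {ω | Ahat ω = true})⁻¹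
        * μ ({ω | A ω = true} ∩ {ω | Ahat ω = true}) ≠ ⊤ :=
      ENNReal.mul_ne_top (ENNReal.inv_ne_top.mpr (hposAhat true).ne') (hfin _)
    have hfin2 : (μ {ω | Ahat ω = false})⁻¹
        * μ ({ω | A ω = true} ∩ {ω | Ahat ω = false}) ≠ ⊤ :=
      ENNReal.mul_ne_top (ENNReal.inv_ne_top.mpr (hposAhat false).ne') (hfin _)
    rw [← ENNReal.toReal_eq_toReal_iff' hfin1 hfin2, ENNReal.toReal_mul, ENNReal.toReal_mul,
      ENNReal.toReal_inv, ENNReal.toReal_inv]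
    exact h
  -- now purely real algebra
  set pT := (μ {ω | A ω = true}).toReal with hpTdef
  set pF := (μ {ω | A ω = false}).toReal with hpFdef
  set qT := (μ {ω | Ahat ω = true}).toReal with hqTdef
  set qF := (μ {ω | Ahat ω = false}).toReal with hqFdef
  set jTT := (μ ({ω | A ω = true} ∩ {ω | Ahat ω = true})).toReal with hjTTdef
  set jFT := (μ ({ω | A ω = false} ∩ {ω | Ahat ω = true})).toReal with hjFTdef
  set jTF := (μ ({ω | A ω = true} ∩ {ω | Ahat ω = false})).toReal with hjTFdef
  set jFF := (μ ({ω | A ω = false} ∩ {ω | Ahat ω = false})).toReal with hjFFdef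
  set mT := (μ ({ω | A ω = true} ∩ {ω | Z ω = z})).toReal with hmTdef
  set mF := (μ ({ω | A ω = false} ∩ {ω | Z ω = z})).toReal with hmFdef
  set nT := (μ ({ω | Ahat ω = true} ∩ {ω | Z ω = z})).toReal with hnTdef
  set nF := (μ ({ω | Ahat ω = false} ∩ {ω | Z ω = z})).toReal with hnFdef
  have hpT : (0:ℝ) < pT := ENNReal.toReal_pos (hposA true).ne' (hfin _)
  have hpF : (0:ℝ) < pF := ENNReal.toReal_pos (hposA false).ne' (hfin _)
  have hqT : (0:ℝ) < qT := ENNReal.toReal_pos (hposAhat true).ne' (hfin _)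
  have hqF : (0:ℝ) < qF := ENNReal.toReal_pos (hposAhat false).ne' (hfin _)
  have e1 := hn true
  have e2 := hn false
  have r1 := hrow true
  have r2 := hrow false
  -- final goal in real form
  rw [cond_apply (hmA true), cond_apply (hmA false)]
  have hfin1 : (μ {ω | A ω = true})⁻¹ * μ ({ω | A ω = true} ∩ {ω | Z ω = z}) ≠ ⊤ :=
    ENNReal.mul_ne_top (ENNReal.inv_ne_top.mpr (hposA true).ne') (hfin _)
  have hfin2 : (μ {ω | A ω = false})⁻¹ * μ ({ω | A ω = false} ∩ {ω | Z ω = z}) ≠ ⊤ :=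
    ENNReal.mul_ne_top (ENNReal.inv_ne_top.mpr (hposA false).ne') (hfin _)
  rw [← ENNReal.toReal_eq_toReal_iff' hfin1 hfin2, ENNReal.toReal_mul, ENNReal.toReal_mul,
    ENNReal.toReal_inv, ENNReal.toReal_inv]
  -- goal: pT⁻¹ * mT = pF⁻¹ * mF
  set x := mT / pT with hxdef
  set y := mF / pF with hydef
  have key : (jTT / qT - jTF / qF) * (x - y) = 0 := by
    have hnT : nT = jTT * x + jFT * y := by
      rw [hxdef, hydef]
      field_simp
      linear_combination e1
    have hnF : nF = jTF * x + jFF * y := by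
      rw [hxdef, hydef]
      field_simp
      linear_combination e2
    have hjFT' : jFT = qT - jTT := by linarith
    have hjFF' : jFF = qF - jTF := by linarith
    have h := hOptR
    rw [hnT, hnF, hjFT', hjFF', inv_mul_eq_div, inv_mul_eq_div,
      div_eq_div_iff hqT.ne' hqF.ne'] at h
    field_simp
    linear_combination h
  have hne : jTT / qT - jTF / qF ≠ 0 := by
    intro h
    apply hNRR
    rw [inv_mul_eq_div, inv_mul_eq_div]
    linarith [h]
  have hxy : x = y := by
    rcases mul_eq_zero.mp key with h | h
    · exact absurd h hne
    · linarith
  rw [inv_mul_eq_div, inv_mul_eq_div]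
  exact hxy
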